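/- arXiv:1503.07577 — 4 statements merged into one kernel-verified Lean document; each statement's English description precedes it below -/
import Mathlib

section
/- Let 𝒜 be a family of subsets of ω, and suppose there is a sequence (Aₙ)ₙ of subsets of ω such that (1) every x ∈ 𝒜 is contained, modulo a finite set, in the union of finitely many Aₙ, and (2) for every n, the set ω \ (A₀ ∪ ⋯ ∪ Aₙ) is infinite. Then there exists an infinite set z ⊆ ω such that x ∩ z is finite for every x ∈ 𝒜. -/
/-!
STATEMENT 0 (Lemma 2.2 of the paper): if every member of `𝒜` is almost contained in a
finite union of the `Aₙ`, and every finite initial union `A₀ ∪ ⋯ ∪ Aₙ` is co-infinite,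
then there is an infinite `z ⊆ ω` almost disjoint from every member of `𝒜`.
-/

theorem easy_lemma (𝒜 : Set (Set ℕ)) (A : ℕ → Set ℕ)
    (h1 : ∀ x ∈ 𝒜, ∃ F : Finset ℕ, (x \ ⋃ n ∈ F, A n).Finite)
    (h2 : ∀ n : ℕ, ((⋃ i ∈ Finset.range (n + 1), A i)ᶜ : Set ℕ).Infinite) :
    ∃ z : Set ℕ, z.Infinite ∧ ∀ x ∈ 𝒜, (x ∩ z).Finite := by
  have hchoice : ∀ n : ℕ, ∃ m, m ∈ ((⋃ i ∈ Finset.range (n + 1), A i)ᶜ : Set ℕ) ∧ n < m :=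
    fun n => (h2 n).exists_gt n
  choose f hf hfgt using hchoice
  refine ⟨Set.range f, ?_, ?_⟩
  · -- range f is unbounded, hence infinite
    intro hfin
    obtain ⟨M, hM⟩ := hfin.bddAbove
    exact absurd (hM (Set.mem_range_self M)) (by simpa using (hfgt M).not_ge)
  · -- each A k meets range f in a finite set
    have hAk : ∀ k : ℕ, (A k ∩ Set.range f).Finite := by
      intro k
      apply Set.Finite.subset ((Set.finite_Iio k).image f)
      rintro m ⟨hmA, n, rfl⟩
      refine ⟨n, ?_, rfl⟩
      by_contra h
      rw [Set.mem_Iio, not_lt] at h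
      exact hf n (Set.mem_biUnion (Finset.mem_range.2 (Nat.lt_succ_of_le h)) hmA)
    intro x hx
    obtain ⟨F, hF⟩ := h1 x hx
    have hsub : x ∩ Set.range f ⊆ (x \ ⋃ n ∈ F, A n) ∪ ⋃ n ∈ F, (A n ∩ Set.range f) := by
      rintro m ⟨hmx, hmr⟩
      by_cases hm : m ∈ ⋃ n ∈ F, A n
      · right
        obtain ⟨n, hn, hmA⟩ := Set.mem_iUnion₂.1 hm
        exact Set.mem_iUnion₂.2 ⟨n, hn, hmA, hmr⟩
      · exact Or.inl ⟨hmx, hm⟩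
    exact Set.Finite.subset (hF.union (Set.Finite.biUnion F.finite_toSet fun n _ => hAk n)) hsub
end

section
/- Let κ be an infinite cardinal and assume Martin's Axiom MA(κ). Let 𝒜 be a family of subsets of ω, and suppose there is a sequence (A_θ)_{θ<κ} of subsets of ω such that every x ∈ 𝒜 is almost contained in a finite union of the A_θ, and for all finitely many θ₀,…,θ_{n−1} < κ the set ω \ (A_{θ₀} ∪ ⋯ ∪ A_{θ_{n−1}}) is infinite. Then there is an infinite z ⊆ ω such that x ∩ z is finite for all x ∈ 𝒜. -/
/-- A filter on a partial order (in the forcing sense): nonempty, upward closed,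
downward directed. -/
def IsPFilter {P : Type} [Preorder P] (G : Set P) : Prop :=
  G.Nonempty ∧ (∀ p ∈ G, ∀ q, p ≤ q → q ∈ G) ∧
    ∀ p ∈ G, ∀ q ∈ G, ∃ t ∈ G, t ≤ p ∧ t ≤ q

/-- A dense subset of a partial order: every condition has an extension in it. -/
def IsDenseSub {P : Type} [Preorder P] (D : Set P) : Prop :=
  ∀ p : P, ∃ q ≤ p, q ∈ D

/-- The countable chain condition: every antichain (set of pairwise incompatible
conditions) is countable. -/
def IsCCC (P : Type) [Preorder P] : Prop :=
  ∀ A : Set P, A.Pairwise (fun p q => ¬ ∃ t, t ≤ p ∧ t ≤ q) → A.Countable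

/-- Martin's Axiom `MA(κ)`: for every ccc partial order and every family of at most
`κ` many dense sets, there is a filter meeting them all. -/
def MartinsAxiom (κ : Cardinal.{0}) : Prop :=
  ∀ (P : Type) [Preorder P], IsCCC P →
    ∀ 𝒟 : Set (Set P), Cardinal.mk ↥𝒟 ≤ κ → (∀ D ∈ 𝒟, IsDenseSub D) →
      ∃ G : Set P, IsPFilter G ∧ ∀ D ∈ 𝒟, (G ∩ D).Nonempty

/-- A forcing condition: a finite set `s` of naturals (the part of `z` decided so far)
together with a finite set `F` of indices (the sets `A θ` to be avoided henceforth). -/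
structure MACond (ι : Type) where
  s : Finset ℕ
  F : Finset ι

/-!
STATEMENT 8 (Lemma 2.7): assuming `MA(κ)`, if every member of `𝒜` is almost
contained in a finite union of the sets `A_θ` (`θ < κ`, here indexed by a type `ι`
of cardinality `κ`) and every finite union of the `A_θ` is co-infinite, then there
is an infinite `z ⊆ ω` almost disjoint from every member of `𝒜`.
-/

theorem ma_easy_lemma (κ : Cardinal.{0}) (hκ : Cardinal.aleph0 ≤ κ)
    (hMA : MartinsAxiom κ)
    (ι : Type) (hι : Cardinal.mk ι = κ)
    (𝒜 : Set (Set ℕ)) (A : ι → Set ℕ)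
    (h1 : ∀ x ∈ 𝒜, ∃ F : Finset ι, (x \ ⋃ θ ∈ F, A θ).Finite)
    (h2 : ∀ F : Finset ι, ((⋃ θ ∈ F, A θ)ᶜ : Set ℕ).Infinite) :
    ∃ z : Set ℕ, z.Infinite ∧ ∀ x ∈ 𝒜, (x ∩ z).Finite := by
  classical
  letI pre : Preorder (MACond ι) :=
    { le := fun p q => q.s ⊆ p.s ∧ q.F ⊆ p.F ∧
        ∀ m ∈ p.s, m ∉ q.s → ∀ θ ∈ q.F, (m : ℕ) ∉ A θ
      le_refl := fun p => ⟨subset_rfl, subset_rfl, fun m hm hm' _ _ => (hm' hm).elim⟩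
      le_trans := by
        rintro a b c ⟨h1, h2, h3⟩ ⟨k1, k2, k3⟩
        refine ⟨k1.trans h1, k2.trans h2, fun m hm hmc θ hθ => ?_⟩
        by_cases hb : m ∈ b.s
        · exact k3 m hb hmc θ hθ
        · exact h3 m hm hb θ (k2 hθ) }
  have hle : ∀ p q : MACond ι, (p ≤ q) = (q.s ⊆ p.s ∧ q.F ⊆ p.F ∧
      ∀ m ∈ p.s, m ∉ q.s → ∀ θ ∈ q.F, (m : ℕ) ∉ A θ) := fun _ _ => rfl
  -- ccc : conditions with equal first coordinate are compatible
  have ccc : IsCCC (MACond ι) := by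
    intro S hS
    have hinj : Set.InjOn (fun p : MACond ι => p.s) S := by
      intro p hp q hq hpq
      by_contra hne
      refine hS hp hq hne ⟨⟨p.s, p.F ∪ q.F⟩, ?_, ?_⟩
      · exact ⟨subset_rfl, Finset.subset_union_left, fun m hm hm' _ _ => (hm' hm).elim⟩
      · have hpq' : p.s = q.s := hpq
        refine ⟨hpq' ▸ subset_rfl, Finset.subset_union_right, fun m hm hm' θ _ => ?_⟩
        exact (hm' (hpq' ▸ hm)).elim
    exact Set.countable_of_injective_of_countable_image hinj (Set.to_countable _)
  -- the dense sets
  let Dn : ℕ → Set (MACond ι) := fun n => {p | ∃ m ∈ p.s, n ≤ m}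
  let Eθ : ι → Set (MACond ι) := fun θ => {p | θ ∈ p.F}
  let 𝒟 : Set (Set (MACond ι)) := Set.range Dn ∪ Set.range Eθ
  have hcard : Cardinal.mk ↥𝒟 ≤ κ := by
    calc Cardinal.mk ↥𝒟 ≤ Cardinal.mk ↥(Set.range Dn) + Cardinal.mk ↥(Set.range Eθ) :=
          Cardinal.mk_union_le _ _
    _ ≤ Cardinal.mk ℕ + Cardinal.mk ι := by
          gcongr <;> exact Cardinal.mk_range_le
    _ = Cardinal.aleph0 + κ := by rw [Cardinal.mk_nat, hι]
    _ = κ := Cardinal.add_eq_right hκ hκ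
  have hdense : ∀ D ∈ 𝒟, IsDenseSub D := by
    rintro D (⟨n, rfl⟩ | ⟨θ, rfl⟩)
    · intro p
      obtain ⟨m, hm, hnm⟩ := (h2 p.F).exists_gt n
      refine ⟨⟨insert m p.s, p.F⟩, ⟨Finset.subset_insert _ _, subset_rfl, ?_⟩,
        ⟨m, Finset.mem_insert_self _ _, hnm.le⟩⟩
      intro m' hm' hnot θ hθ
      have : m' = m := by
        rcases Finset.mem_insert.mp hm' with h | h
        · exact h
        · exact absurd h hnot
      subst this
      simp only [Set.mem_compl_iff, Set.mem_iUnion] at hm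
      exact fun hmem => hm ⟨θ, hθ, hmem⟩
    · intro p
      exact ⟨⟨p.s, insert θ p.F⟩, ⟨subset_rfl, Finset.subset_insert _ _,
        fun m hm hm' _ _ => (hm' hm).elim⟩, Finset.mem_insert_self _ _⟩
  obtain ⟨G, ⟨-, -, hdir⟩, hmeet⟩ := hMA (MACond ι) ccc 𝒟 hcard hdense
  -- the generic real
  refine ⟨{m : ℕ | ∃ p ∈ G, m ∈ p.s}, ?_, ?_⟩
  · apply Set.infinite_of_forall_exists_gt
    intro n
    obtain ⟨p, hpG, m, hm, hnm⟩ := hmeet (Dn (n + 1)) (Or.inl ⟨n + 1, rfl⟩)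
    exact ⟨m, ⟨p, hpG, hm⟩, hnm⟩
  · -- each A θ meets z in a finite set
    have key : ∀ θ : ι, ({m : ℕ | ∃ p ∈ G, m ∈ p.s} ∩ A θ).Finite := by
      intro θ
      obtain ⟨p, hpG, hθp⟩ := hmeet (Eθ θ) (Or.inr ⟨θ, rfl⟩)
      apply Set.Finite.subset p.s.finite_toSet
      rintro m ⟨⟨q, hqG, hmq⟩, hmA⟩
      obtain ⟨t, htG, htp, htq⟩ := hdir p hpG q hqG
      by_contra hmp
      exact (htp.2.2 m (htq.1 hmq) hmp θ hθp) hmA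
    intro x hx
    obtain ⟨F, hF⟩ := h1 x hx
    have : x ∩ {m : ℕ | ∃ p ∈ G, m ∈ p.s} ⊆
        (x \ ⋃ θ ∈ F, A θ) ∪ ⋃ θ ∈ F, ({m : ℕ | ∃ p ∈ G, m ∈ p.s} ∩ A θ) := by
      rintro m ⟨hmx, hmz⟩
      by_cases h : m ∈ ⋃ θ ∈ F, A θ
      · right
        simp only [Set.mem_iUnion] at h ⊢
        obtain ⟨θ, hθ, hmA⟩ := h
        exact ⟨θ, hθ, hmz, hmA⟩
      · exact Or.inl ⟨hmx, h⟩
    exact Set.Finite.subset (hF.union (Set.Finite.biUnion F.finite_toSet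
      fun θ _ => key θ)) this
end

section
/- Let N be an inner model (or more concretely: a transitive model of ZFC), ℙ ∈ N a forcing notion, σ a ℙ-name in N, and p ∈ ℙ a condition forcing that σ is a subset of ω not in N, such that (p, p) forces in ℙ × ℙ that if σ₀ ≠ σ₁ then σ₀ ∩ σ₁ is finite (where σ₀, σ₁ are the names for σ evaluated by the left and right generics). Then there is an infinite (ℙ, σ)-diagonal sequence below p. -/
/-!
Nice-name forcing framework.  A condition `p` is stronger than `q` when `p ≤ q`.
A (nice) `ℙ`-name `σ` for a subset of `ω` is represented by the function assigning
to each `n` the set `σ n` of conditions putting `n` into `σ`.  Note that every nice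
name automatically denotes a subset of `ω`, so the requirement `r ⊩ σ ⊆ ω` holds.
-/

/-- A nice `ℙ`-name for a subset of `ω`. -/
def NName (P : Type*) := ℕ → Set P

/-- `p ⊩ ň ∈ σ`: the set `σ n` is predense below `p`. -/
def forcesMem {P : Type*} [Preorder P] (σ : NName P) (p : P) (n : ℕ) : Prop :=
  ∀ q ≤ p, ∃ r ≤ q, ∃ s ∈ σ n, r ≤ s

/-- `p ⊩ ň ∉ σ`: no extension of `p` forces `ň ∈ σ`. -/
def forcesNotMem {P : Type*} [Preorder P] (σ : NName P) (p : P) (n : ℕ) : Prop :=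
  ∀ q ≤ p, ¬ ∃ s ∈ σ n, q ≤ s

/-- `x(σ, p) = { n ∈ ω : ∃ q ≤ p, q ⊩ ň ∈ σ }`. -/
def hull {P : Type*} [Preorder P] (σ : NName P) (p : P) : Set ℕ :=
  {n | ∃ q ≤ p, forcesMem σ q n}

/-- `p ⊩ σ = Ǎ` for a ground-model set `A ⊆ ω`. -/
def ForcesEqCheck {P : Type*} [Preorder P] (σ : NName P) (p : P) (A : Set ℕ) : Prop :=
  ∀ n : ℕ, (n ∈ A → forcesMem σ p n) ∧ (n ∉ A → forcesNotMem σ p n)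

/-- `(q, r) ⊩_{ℙ×ℙ} σ₀ ≠ σ₁`: densely below `(q, r)`, the two coordinates force
contradictory information about some `ň ∈ σ`. -/
def ForcesNe {P : Type*} [Preorder P] (σ : NName P) (q r : P) : Prop :=
  ∀ q' ≤ q, ∀ r' ≤ r, ∃ q'' ≤ q', ∃ r'' ≤ r', ∃ n : ℕ,
    (forcesMem σ q'' n ∧ forcesNotMem σ r'' n) ∨
    (forcesNotMem σ q'' n ∧ forcesMem σ r'' n)

/-!
STATEMENT 13 (Lemma 3.2): let `N` be an inner model (represented by its collection
`N` of subsets of `ω`), `ℙ ∈ N` a forcing notion and `σ ∈ N` a `ℙ`-name (so all the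
sets `x(σ, q)`, being computed in `N`, lie in `N`), and let `p` force `σ ⊆ ω ∧ σ ∉ N`
(i.e. no extension of `p` forces `σ` equal to the check of a member of `N`).
Assume `(p, p) ⊩_{ℙ×ℙ} σ₀ ≠ σ₁ → |σ₀ ∩ σ₁| < ℵ₀`, rendered semantically: whenever
`(q, r) ≤ (p, p)` forces `σ₀ ≠ σ₁`, then densely below `(q, r)` some `(q'', r'')`
forces `σ₀ ∩ σ₁ ⊆ m̌` for some `m`, i.e. `x(σ, q'') ∩ x(σ, r'') ⊆ m`.
Then there is an infinite `(ℙ, σ)`-diagonal sequence below `p`.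
-/

theorem exists_infinite_diagonal_sequence {P : Type*} [Preorder P]
    (N : Set (Set ℕ)) (σ : NName P) (p : P)
    (hσN : ∀ q : P, hull σ q ∈ N)
    (hnotinN : ∀ p' ≤ p, ∀ A ∈ N, ¬ ForcesEqCheck σ p' A)
    (hstar : ∀ q ≤ p, ∀ r ≤ p, ForcesNe σ q r →
      ∀ q' ≤ q, ∀ r' ≤ r, ∃ q'' ≤ q', ∃ r'' ≤ r', ∃ m : ℕ,
        hull σ q'' ∩ hull σ r'' ⊆ Set.Iio m) :
    ∃ (p0 p1 : ℕ → P) (bd : ℕ → ℕ),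
      ∀ i : ℕ, p0 i ≤ p ∧ p1 i ≤ p ∧
        p0 (i + 1) ≤ p1 i ∧ p1 (i + 1) ≤ p1 i ∧
        hull σ (p0 i) ∩ hull σ (p1 i) ⊆ Set.Iio (bd i) := by
  classical
  -- Step 1: every pair below p forces σ₀ ≠ σ₁.
  have hne : ∀ c ≤ p, ForcesNe σ c c := by
    intro c hc q' hq' r' hr'
    by_contra h
    apply hnotinN q' (hq'.trans hc) (hull σ r') (hσN r')
    intro n
    constructor
    · -- n ∈ hull σ r' → forcesMem σ q' n
      rintro ⟨w, hw, hwmem⟩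
      intro u hu
      by_contra hcon
      have hnot : forcesNotMem σ u n := by
        intro v hv ⟨s, hs, hvs⟩
        exact hcon ⟨v, hv, s, hs, hvs⟩
      exact h ⟨u, hu, w, hw, n, Or.inr ⟨hnot, hwmem⟩⟩
    · -- n ∉ hull σ r' → forcesNotMem σ q' n
      intro hn u hu
      rintro ⟨s, hs, hus⟩
      have hmem : forcesMem σ u n := fun w hw => ⟨w, le_rfl, s, hs, hw.trans hus⟩
      have hr'mem : ¬ forcesMem σ r' n := fun hf => hn ⟨r', le_rfl, hf⟩
      rw [forcesMem] at hr'mem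
      push_neg at hr'mem
      obtain ⟨w, hw, hwnot⟩ := hr'mem
      have hnot : forcesNotMem σ w n := by
        intro v hv ⟨s', hs', hvs⟩
        exact (hwnot v hv s' hs') hvs
      exact h ⟨u, hu, w, hw, n, Or.inl ⟨hmem, hnot⟩⟩
  -- Step 2: the key extension lemma.
  have key : ∀ c : {c : P // c ≤ p}, ∃ a, ∃ b, ∃ m : ℕ,
      a ≤ c.1 ∧ b ≤ c.1 ∧ hull σ a ∩ hull σ b ⊆ Set.Iio m := by
    rintro ⟨c, hc⟩
    obtain ⟨a, ha, b, hb, m, hm⟩ :=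
      hstar c hc c hc (hne c hc) c le_rfl c le_rfl
    exact ⟨a, b, m, ha, hb, hm⟩
  choose A B M hA hB hM using key
  -- Step 3: recursive construction.
  let seq : ℕ → {c : P // c ≤ p} := fun n =>
    Nat.rec ⟨p, le_refl p⟩ (fun _ c => ⟨B c, le_trans (hB c) c.2⟩) n
  refine ⟨fun i => A (seq i), fun i => B (seq i), fun i => M (seq i), fun i => ?_⟩
  refine ⟨(hA (seq i)).trans (seq i).2, (hB (seq i)).trans (seq i).2, ?_, ?_, hM (seq i)⟩
  · exact hA (seq (i + 1))
  · exact hB (seq (i + 1))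
end

section
/- If T is a tree on 2 × ω such that p[T] is an almost disjoint family, and (tᵢʲ)_{i≤n} is a T-terminal finite diagonal sequence (one extended by no strictly longer diagonal sequence), then p[T_{[t¹ₙ]}], the projection of the part of T compatible with the top leaf t¹ₙ, contains at most one element. -/
/-- The subset of `ω` coded by a finite binary sequence `u`,
namely `{ n < length u : u n = 1 }`. -/
def codes (u : List Bool) : Set ℕ := {n | u.getD n false = true}

/-- Extension of nodes (pairs of finite sequences): both coordinates extend. -/
def NodeExt {K : Type*} (s t : List Bool × List K) : Prop := s.1 <+: t.1 ∧ s.2 <+: t.2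

/-- Incompatibility of finite binary sequences: neither is an initial segment
of the other. -/
def Incomp (u v : List Bool) : Prop := ¬ u <+: v ∧ ¬ v <+: u

/-- A tree on `2 × K`: a set of pairs of finite sequences of equal length,
closed under (simultaneous) initial segments. -/
def IsTree2 {K : Type*} (T : Set (List Bool × List K)) : Prop :=
  (∀ p ∈ T, p.1.length = p.2.length) ∧
  (∀ p ∈ T, ∀ n : ℕ, (p.1.take n, p.2.take n) ∈ T)

/-- The projection `p[T]` of the set of infinite branches of `T` onto the first
coordinate, viewed as a family of subsets of `ω`. -/
def proj {K : Type*} (T : Set (List Bool × List K)) : Set (Set ℕ) :=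
  { A | ∃ (x : ℕ → Bool) (y : ℕ → K),
      (∀ n : ℕ, ((List.ofFn fun i : Fin n => x i), (List.ofFn fun i : Fin n => y i)) ∈ T) ∧
      A = {n | x n = true} }

/-- A family of subsets of `ω` is almost disjoint if any two distinct members have
finite intersection. -/
def AlmostDisjointFam (𝒜 : Set (Set ℕ)) : Prop :=
  ∀ x ∈ 𝒜, ∀ y ∈ 𝒜, x = y ∨ (x ∩ y).Finite

/-- Two nodes are compatible if one extends the other. -/
def Compat {K : Type*} (s t : List Bool × List K) : Prop := NodeExt s t ∨ NodeExt t s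

/-- `T_{[t]}`: the nodes of `T` compatible with `t`. -/
def restrictT {K : Type*} (T : Set (List Bool × List K)) (t : List Bool × List K) :
    Set (List Bool × List K) := {s ∈ T | Compat s t}

/-- `(a, b)` is a "diagonal pair" in `T`: equal lengths, first coordinates
incompatible, intersections of coded first coordinates frozen among all extensions in
`T`, and nonempty projection above `a`. -/
def IsDiagPair {K : Type*} (T : Set (List Bool × List K)) (a b : List Bool × List K) : Prop :=
  a ∈ T ∧ b ∈ T ∧ a.1.length = b.1.length ∧ Incomp a.1 b.1 ∧
  (∀ s ∈ T, ∀ t ∈ T, NodeExt a s → NodeExt b t →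
    codes s.1 ∩ codes t.1 = codes a.1 ∩ codes b.1) ∧
  (proj (restrictT T a)).Nonempty

/-- A diagonal sequence in `T` of length `m`: `(t0 i, t1 i)` for `i < m`, with each
pair a diagonal pair and `t1 i` extended by both members of the next pair. -/
def DiagSeqUpTo {K : Type*} (T : Set (List Bool × List K)) (m : ℕ)
    (t0 t1 : ℕ → List Bool × List K) : Prop :=
  (∀ i, i < m → IsDiagPair T (t0 i) (t1 i)) ∧
  ∀ i, i + 1 < m → NodeExt (t1 i) (t0 (i + 1)) ∧ NodeExt (t1 i) (t1 (i + 1))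

/-- `T` admits an infinite diagonal sequence. -/
def HasInfDiagSeq {K : Type*} (T : Set (List Bool × List K)) : Prop :=
  ∃ t0 t1 : ℕ → List Bool × List K,
    ∀ i, IsDiagPair T (t0 i) (t1 i) ∧ NodeExt (t1 i) (t0 (i + 1)) ∧ NodeExt (t1 i) (t1 (i + 1))

/-!
STATEMENT 19: if `p[T]` is almost disjoint and `(tᵢʲ)_{i ≤ n}` is a `T`-terminal
finite diagonal sequence (one not extendable to any strictly longer diagonal
sequence), then the projection of the part of `T` compatible with the top leaf
`t¹ₙ` has at most one element.
-/

section AuxLemmas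

/-- getD of a prefix agrees with getD of the extension below the prefix length. -/
theorem prefix_getD {α : Type*} (d : α) {u v : List α} (h : u <+: v) {i : ℕ}
    (hi : i < u.length) : v.getD i d = u.getD i d := by
  rw [List.getD_eq_getElem u d hi, List.getD_eq_getElem v d (hi.trans_le h.length_le)]
  exact (List.IsPrefix.getElem h hi).symm

theorem codes_lt {u : List Bool} {p : ℕ} (hp : p ∈ codes u) : p < u.length := by
  by_contra h
  have : u.getD p false = false := List.getD_eq_default u false (le_of_not_gt h)
  simp only [codes, Set.mem_setOf_eq, this] at hp
  exact Bool.false_ne_true hp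

theorem codes_mono {u v : List Bool} (h : u <+: v) : codes u ⊆ codes v := by
  intro p hp
  have hl := codes_lt hp
  simp only [codes, Set.mem_setOf_eq] at hp ⊢
  rw [prefix_getD false h hl]
  exact hp

theorem codes_of_prefix_lt {u v : List Bool} (h : u <+: v) {p : ℕ} (hp : p ∈ codes v)
    (hl : p < u.length) : p ∈ codes u := by
  simp only [codes, Set.mem_setOf_eq] at hp ⊢
  rw [← prefix_getD false h hl]
  exact hp

theorem NodeExt.rfl {K : Type*} {s : List Bool × List K} : NodeExt s s :=
  ⟨List.prefix_refl _, List.prefix_refl _⟩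

theorem NodeExt.trans {K : Type*} {s t u : List Bool × List K}
    (h1 : NodeExt s t) (h2 : NodeExt t u) : NodeExt s u :=
  ⟨h1.1.trans h2.1, h1.2.trans h2.2⟩

theorem NodeExt.eq_of_lengths {K : Type*} {s t : List Bool × List K} (h : NodeExt s t)
    (h1 : s.1.length = t.1.length) (h2 : s.2.length = t.2.length) : s = t :=
  Prod.ext (h.1.eq_of_length h1) (h.2.eq_of_length h2)

/-- The length-`m` initial segment pair of a branch `(x, y)`. -/
def bpre {K : Type*} (x : ℕ → Bool) (y : ℕ → K) (m : ℕ) : List Bool × List K :=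
  (List.ofFn fun i : Fin m => x i, List.ofFn fun i : Fin m => y i)

theorem bpre_len1 {K : Type*} (x : ℕ → Bool) (y : ℕ → K) (m : ℕ) :
    (bpre x y m).1.length = m := by simp [bpre]

theorem bpre_len2 {K : Type*} (x : ℕ → Bool) (y : ℕ → K) (m : ℕ) :
    (bpre x y m).2.length = m := by simp [bpre]

theorem ofFn_prefix {α : Type*} (x : ℕ → α) {m m' : ℕ} (h : m ≤ m') :
    (List.ofFn fun i : Fin m => x i) <+: (List.ofFn fun i : Fin m' => x i) := by
  rw [List.prefix_iff_eq_take]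
  apply List.ext_getElem
  · simp [h]
  · intro i h1 h2
    simp [List.getElem_take]

theorem bpre_ext {K : Type*} (x : ℕ → Bool) (y : ℕ → K) {m m' : ℕ} (h : m ≤ m') :
    NodeExt (bpre x y m) (bpre x y m') :=
  ⟨ofFn_prefix x h, ofFn_prefix y h⟩

theorem bpre_getD1 {K : Type*} (x : ℕ → Bool) (y : ℕ → K) {m i : ℕ} (h : i < m) :
    (bpre x y m).1.getD i false = x i := by
  rw [List.getD_eq_getElem _ false (by simpa [bpre] using h)]
  simp [bpre]

theorem bpre_getD2 {K : Type*} [Inhabited K] (x : ℕ → Bool) (y : ℕ → K) {m i : ℕ} (h : i < m) :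
    (bpre x y m).2.getD i default = y i := by
  rw [List.getD_eq_getElem _ default (by simpa [bpre] using h)]
  simp [bpre]

theorem mem_codes_bpre {K : Type*} (x : ℕ → Bool) (y : ℕ → K) {m p : ℕ} :
    p ∈ codes (bpre x y m).1 ↔ p < m ∧ x p = true := by
  constructor
  · intro hp
    have hl : p < m := by simpa [bpre_len1] using codes_lt hp
    refine ⟨hl, ?_⟩
    simpa only [codes, Set.mem_setOf_eq, bpre_getD1 x y hl] using hp
  · rintro ⟨hl, hx⟩
    simp only [codes, Set.mem_setOf_eq, bpre_getD1 x y hl]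
    exact hx

theorem mem_proj_of_bpre {K : Type*} {T : Set (List Bool × List K)} (x : ℕ → Bool) (y : ℕ → K)
    (h : ∀ m, bpre x y m ∈ T) : {n | x n = true} ∈ proj T :=
  ⟨x, y, h, rfl⟩

theorem nodeExt_mono {K : Type*} {v : ℕ → List Bool × List K}
    (hchain : ∀ k, NodeExt (v k) (v (k + 1))) :
    ∀ k k', k ≤ k' → NodeExt (v k) (v k') := by
  intro k k' h
  induction k' with
  | zero => rw [Nat.le_zero.mp h]; exact NodeExt.rfl
  | succ m ih =>
    rcases Nat.lt_succ_iff_lt_or_eq.mp (Nat.lt_succ_of_le h) with h' | h'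
    · exact (ih (Nat.lt_succ_iff.mp h')).trans (hchain m)
    · rw [h']; exact NodeExt.rfl

/-- A chain in a tree with unbounded lengths yields an infinite branch. -/
theorem chain_branch {T : Set (List Bool × List ℕ)} (hT : IsTree2 T)
    (v : ℕ → List Bool × List ℕ) (hvT : ∀ k, v k ∈ T)
    (hchain : ∀ k, NodeExt (v k) (v (k + 1)))
    (hub : ∀ m : ℕ, ∃ k, m ≤ (v k).1.length) :
    ∃ x : ℕ → Bool, ∃ y : ℕ → ℕ,
      (∀ m, bpre x y m ∈ T) ∧
      (∀ k, ∀ i < (v k).1.length, x i = (v k).1.getD i false) ∧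
      (∀ k, ∀ i < (v k).2.length, y i = (v k).2.getD i 0) := by
  have hmono := nodeExt_mono hchain
  have hlen : ∀ k, (v k).1.length = (v k).2.length := fun k => hT.1 _ (hvT k)
  choose Kf hKf using hub
  set x : ℕ → Bool := fun i => (v (Kf (i + 1))).1.getD i false with hx
  set y : ℕ → ℕ := fun i => (v (Kf (i + 1))).2.getD i 0 with hy
  have agree1 : ∀ k, ∀ i < (v k).1.length, x i = (v k).1.getD i false := by
    intro k i hi
    have hi' : i < (v (Kf (i + 1))).1.length := hKf (i + 1)
    rcases le_total k (Kf (i + 1)) with h | h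
    · exact (prefix_getD false (hmono _ _ h).1 hi)
    · exact (prefix_getD false (hmono _ _ h).1 hi').symm
  have agree2 : ∀ k, ∀ i < (v k).2.length, y i = (v k).2.getD i 0 := by
    intro k i hi
    have hi' : i < (v (Kf (i + 1))).2.length := by rw [← hlen]; exact hKf (i + 1)
    rcases le_total k (Kf (i + 1)) with h | h
    · exact (prefix_getD 0 (hmono _ _ h).2 hi)
    · exact (prefix_getD 0 (hmono _ _ h).2 hi').symm
  refine ⟨x, y, ?_, agree1, agree2⟩
  intro m
  obtain ⟨k, hk⟩ : ∃ k, m ≤ (v k).1.length := ⟨Kf m, hKf m⟩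
  have hk2 : m ≤ (v k).2.length := by rw [← hlen]; exact hk
  have h1 : (bpre x y m).1 = (v k).1.take m := by
    apply List.ext_getElem
    · simpa [bpre_len1] using (Nat.min_eq_left hk).symm
    · intro i h1 h2
      have hi : i < m := by simpa [bpre_len1] using h1
      have him : i < (v k).1.length := lt_of_lt_of_le hi hk
      simp only [bpre, List.getElem_ofFn, List.getElem_take]
      rw [← List.getD_eq_getElem _ false him]
      exact agree1 k i him
  have h2 : (bpre x y m).2 = (v k).2.take m := by
    apply List.ext_getElem
    · simpa [bpre_len2] using (Nat.min_eq_left hk2).symm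
    · intro i h1 h2
      have hi : i < m := by simpa [bpre_len2] using h1
      have him : i < (v k).2.length := lt_of_lt_of_le hi hk2
      simp only [bpre, List.getElem_ofFn, List.getElem_take]
      rw [← List.getD_eq_getElem _ 0 him]
      exact agree2 k i him
  have : bpre x y m = ((v k).1.take m, (v k).2.take m) := Prod.ext h1 h2
  rw [this]
  exact hT.2 _ (hvT k) m

/-- `(a, b)` has frozen intersection in `T`. -/
def Frozen (T : Set (List Bool × List ℕ)) (a b : List Bool × List ℕ) : Prop :=
  ∀ s ∈ T, ∀ t ∈ T, NodeExt a s → NodeExt b t →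
    codes s.1 ∩ codes t.1 = codes a.1 ∩ codes b.1

theorem exists_frozen {T : Set (List Bool × List ℕ)} (hT : IsTree2 T)
    (had : AlmostDisjointFam (proj T))
    {a₀ b₀ : List Bool × List ℕ} (ha₀ : a₀ ∈ T) (hb₀ : b₀ ∈ T)
    {d : ℕ} (hd1 : d < a₀.1.length) (hd2 : d < b₀.1.length)
    (hne : a₀.1.getD d false ≠ b₀.1.getD d false) :
    ∃ a b, a ∈ T ∧ b ∈ T ∧ NodeExt a₀ a ∧ NodeExt b₀ b ∧ Frozen T a b := by
  by_contra hcon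
  push_neg at hcon
  have step : ∀ a b, a ∈ T → b ∈ T → NodeExt a₀ a → NodeExt b₀ b →
      ∃ a' b', a' ∈ T ∧ b' ∈ T ∧ NodeExt a a' ∧ NodeExt b b' ∧
        ∃ p, p ∈ codes a'.1 ∩ codes b'.1 ∧ p ∉ codes a.1 ∩ codes b.1 := by
    intro a b ha hb hea heb
    have hnf := hcon a b ha hb hea heb
    rw [Frozen] at hnf
    push_neg at hnf
    obtain ⟨s, hs, t, ht, hes, het, hne'⟩ := hnf
    refine ⟨s, t, hs, ht, hes, het, ?_⟩
    have hsub : codes a.1 ∩ codes b.1 ⊆ codes s.1 ∩ codes t.1 :=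
      Set.inter_subset_inter (codes_mono hes.1) (codes_mono het.1)
    exact Set.not_subset.mp (fun hss => hne' (Set.Subset.antisymm hss hsub))
  let Q := {q : (List Bool × List ℕ) × (List Bool × List ℕ) //
      q.1 ∈ T ∧ q.2 ∈ T ∧ NodeExt a₀ q.1 ∧ NodeExt b₀ q.2}
  have step' : ∀ q : Q, ∃ q' : Q, NodeExt q.1.1 q'.1.1 ∧ NodeExt q.1.2 q'.1.2 ∧
      ∃ p, p ∈ codes q'.1.1.1 ∩ codes q'.1.2.1 ∧ p ∉ codes q.1.1.1 ∩ codes q.1.2.1 := by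
    rintro ⟨⟨a, b⟩, ha, hb, hea, heb⟩
    obtain ⟨a', b', ha', hb', he1, he2, hp⟩ := step a b ha hb hea heb
    exact ⟨⟨(a', b'), ha', hb', hea.trans he1, heb.trans he2⟩, he1, he2, hp⟩
  choose next hne1 hne2 hpt using step'
  let g : ℕ → Q := fun k =>
    Nat.rec ⟨(a₀, b₀), ha₀, hb₀, NodeExt.rfl, NodeExt.rfl⟩ (fun _ q => next q) k
  have hg0 : (g 0).1 = (a₀, b₀) := rfl
  have hgs : ∀ k, g (k + 1) = next (g k) := fun k => rfl
  set u : ℕ → List Bool × List ℕ := fun k => (g k).1.1 with hu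
  set w : ℕ → List Bool × List ℕ := fun k => (g k).1.2 with hw
  have huT : ∀ k, u k ∈ T := fun k => (g k).2.1
  have hwT : ∀ k, w k ∈ T := fun k => (g k).2.2.1
  have hchu : ∀ k, NodeExt (u k) (u (k + 1)) := fun k => hne1 (g k)
  have hchw : ∀ k, NodeExt (w k) (w (k + 1)) := fun k => hne2 (g k)
  have hmu := nodeExt_mono hchu
  have hmw := nodeExt_mono hchw
  choose pfn hpmem hpnot using fun k => hpt (g k)
  have hImono : ∀ k k', k ≤ k' →
      codes (u k).1 ∩ codes (w k).1 ⊆ codes (u k').1 ∩ codes (w k').1 := fun k k' h =>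
    Set.inter_subset_inter (codes_mono (hmu k k' h).1) (codes_mono (hmw k k' h).1)
  have hinj : Function.Injective pfn := by
    intro j k hjk
    by_contra hne'
    rcases Nat.lt_or_ge j k with h | h
    · exact hpnot k (hjk ▸ hImono (j + 1) k h (hpmem j))
    · have h' : k < j := lt_of_le_of_ne h (Ne.symm hne')
      exact hpnot j (hjk ▸ hImono (k + 1) j h' (hpmem k))
  have hub : ∀ m : ℕ, ∃ k, m ≤ (u k).1.length := by
    intro m
    refine ⟨m, ?_⟩
    have hS : (Finset.range m).image pfn ⊆ Finset.range ((u m).1.length) := by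
      intro p hp
      simp only [Finset.mem_image, Finset.mem_range] at hp ⊢
      obtain ⟨j, hj, rfl⟩ := hp
      exact codes_lt (hImono (j + 1) m hj (hpmem j)).1
    have := Finset.card_le_card hS
    rwa [Finset.card_image_of_injective _ hinj, Finset.card_range, Finset.card_range] at this
  have hubw : ∀ m : ℕ, ∃ k, m ≤ (w k).1.length := by
    intro m
    refine ⟨m, ?_⟩
    have hS : (Finset.range m).image pfn ⊆ Finset.range ((w m).1.length) := by
      intro p hp
      simp only [Finset.mem_image, Finset.mem_range] at hp ⊢
      obtain ⟨j, hj, rfl⟩ := hp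
      exact codes_lt (hImono (j + 1) m hj (hpmem j)).2
    have := Finset.card_le_card hS
    rwa [Finset.card_image_of_injective _ hinj, Finset.card_range, Finset.card_range] at this
  obtain ⟨x, y, hxT, hag1, _⟩ := chain_branch hT u huT hchu hub
  obtain ⟨x', y', hx'T, hag1', _⟩ := chain_branch hT w hwT hchw hubw
  have hX : {n | x n = true} ∈ proj T := mem_proj_of_bpre x y hxT
  have hY : {n | x' n = true} ∈ proj T := mem_proj_of_bpre x' y' hx'T
  have hu0 : u 0 = a₀ := rfl
  have hw0 : w 0 = b₀ := rfl
  have hxd : x d = a₀.1.getD d false := by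
    have := hag1 0 d (by rw [hu0]; exact hd1)
    rwa [hu0] at this
  have hx'd : x' d = b₀.1.getD d false := by
    have := hag1' 0 d (by rw [hw0]; exact hd2)
    rwa [hw0] at this
  have hmemX : ∀ k, pfn k ∈ {n | x n = true} := by
    intro k
    have h1 : pfn k ∈ codes (u (k + 1)).1 := (hpmem k).1
    have h2 := hag1 (k + 1) (pfn k) (codes_lt h1)
    simp only [Set.mem_setOf_eq, h2]
    exact h1
  have hmemY : ∀ k, pfn k ∈ {n | x' n = true} := by
    intro k
    have h1 : pfn k ∈ codes (w (k + 1)).1 := (hpmem k).2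
    have h2 := hag1' (k + 1) (pfn k) (codes_lt h1)
    simp only [Set.mem_setOf_eq, h2]
    exact h1
  rcases had _ hX _ hY with heq | hfin
  · have : x d = x' d := by
      have h1 : (x d = true) ↔ (x' d = true) := Set.ext_iff.mp heq d
      exact Bool.coe_iff_coe.mp h1

    rw [hxd, hx'd] at this
    exact hne this
  · have hinf : ({n | x n = true} ∩ {n | x' n = true}).Infinite :=
      Set.infinite_of_injective_forall_mem hinj
        (fun k => Set.mem_inter (hmemX k) (hmemY k))
    exact hinf hfin

theorem proper_ext_longer {T : Set (List Bool × List ℕ)} (hT : IsTree2 T)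
    {v w : List Bool × List ℕ} (hv : v ∈ T) (hw : w ∈ T) (he : NodeExt v w)
    (hne : w ≠ v) : v.1.length < w.1.length := by
  rcases Nat.lt_or_ge v.1.length w.1.length with h | h
  · exact h
  · exfalso
    apply hne
    have h1 : v.1.length = w.1.length := le_antisymm he.1.length_le h
    have h2 : v.2.length = w.2.length := by
      rw [← hT.1 _ hv, ← hT.1 _ hw]; exact h1
    exact (he.eq_of_lengths h1 h2).symm

end AuxLemmas

theorem terminal_top_leaf_subsingleton
    (T : Set (List Bool × List ℕ)) (hT : IsTree2 T)
    (had : AlmostDisjointFam (proj T))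
    (n : ℕ) (t0 t1 : ℕ → List Bool × List ℕ)
    (hd : DiagSeqUpTo T (n + 1) t0 t1)
    (hterm : ¬ ∃ m, n + 1 < m ∧ ∃ s0 s1 : ℕ → List Bool × List ℕ,
        DiagSeqUpTo T m s0 s1 ∧ ∀ i ≤ n, s0 i = t0 i ∧ s1 i = t1 i) :
    (proj (restrictT T (t1 n))).Subsingleton := by
  intro A hA B hB
  by_contra hne
  -- the two branches
  obtain ⟨x, yx, hx, hAeq⟩ := hA
  obtain ⟨y, yy, hy, hBeq⟩ := hB
  have hx' : ∀ m, bpre x yx m ∈ restrictT T (t1 n) := hx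
  have hy' : ∀ m, bpre y yy m ∈ restrictT T (t1 n) := hy
  have ht1T : t1 n ∈ T := (hd.1 n (Nat.lt_succ_self n)).2.1
  set L := (t1 n).1.length with hL
  have ht1len : (t1 n).2.length = L := (hT.1 _ ht1T).symm
  -- any branch of the restricted tree passes through `t1 n`
  have branch_base : ∀ (z : ℕ → Bool) (yz : ℕ → ℕ),
      (∀ m, bpre z yz m ∈ restrictT T (t1 n)) → bpre z yz L = t1 n := by
    intro z yz hz
    rcases (hz L).2 with h | h
    · exact h.eq_of_lengths (by rw [bpre_len1]) (by rw [bpre_len2, ht1len])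
    · exact (h.eq_of_lengths (by rw [bpre_len1]) (by rw [bpre_len2, ht1len])).symm
  have branch_ge : ∀ (z : ℕ → Bool) (yz : ℕ → ℕ),
      (∀ m, bpre z yz m ∈ restrictT T (t1 n)) → ∀ m, L ≤ m →
      NodeExt (t1 n) (bpre z yz m) := by
    intro z yz hz m hm
    rw [← branch_base z yz hz]
    exact bpre_ext z yz hm
  -- extending the diagonal sequence is impossible
  have final : ∀ a b : List Bool × List ℕ, IsDiagPair T a b →
      NodeExt (t1 n) a → NodeExt (t1 n) b → False := by
    intro a b hp hea heb
    apply hterm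
    refine ⟨n + 2, by omega, Function.update t0 (n + 1) a, Function.update t1 (n + 1) b,
      ⟨?_, ?_⟩, ?_⟩
    · intro i hi
      rcases Nat.lt_succ_iff_lt_or_eq.mp hi with h | h
      · rw [Function.update_of_ne (by omega), Function.update_of_ne (by omega)]
        exact hd.1 i h
      · subst h
        rw [Function.update_self, Function.update_self]
        exact hp
    · intro i hi
      rcases Nat.lt_or_ge i n with h | h
      · rw [Function.update_of_ne (by omega : i ≠ n + 1),
          Function.update_of_ne (by omega : i + 1 ≠ n + 1),
          Function.update_of_ne (by omega : i + 1 ≠ n + 1)]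
        exact hd.2 i (by omega)
      · have hin : i = n := by omega
        subst hin
        rw [Function.update_of_ne (by omega : i ≠ i + 1), Function.update_self,
          Function.update_self]
        exact ⟨hea, heb⟩
    · intro i hi
      rw [Function.update_of_ne (by omega), Function.update_of_ne (by omega)]
      exact ⟨rfl, rfl⟩
  -- a coordinate where the two branches differ
  obtain ⟨d, hdne⟩ : ∃ d, x d ≠ y d := by
    by_contra h
    push_neg at h
    apply hne
    rw [hAeq, hBeq]
    ext p
    simp [h p]
  set M := max (d + 1) L with hM
  have hdM : d < M := lt_of_lt_of_le (Nat.lt_succ_self d) (le_max_left _ _)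
  have hLM : L ≤ M := le_max_right _ _
  by_cases hD : ∃ t', t' ∈ T ∧ NodeExt (t1 n) t' ∧ d < t'.1.length ∧
      ∀ w ∈ T, NodeExt t' w → w = t'
  · -- Case D : a dead end above `t1 n` of length `> d`
    obtain ⟨t', ht'T, ht'ext, ht'd, ht'dead⟩ := hD
    set ℓ := t'.1.length with hℓ
    have hLℓ : L ≤ ℓ := ht'ext.1.length_le
    have caseD : ∀ (z : ℕ → Bool) (yz : ℕ → ℕ),
        (∀ m, bpre z yz m ∈ restrictT T (t1 n)) → (bpre z yz ℓ).1 ≠ t'.1 → False := by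
      intro z yz hz hne1
      refine final (bpre z yz ℓ) t' ⟨(hz ℓ).1, ht'T, by rw [bpre_len1], ?_, ?_, ?_⟩
        (branch_ge z yz hz ℓ hLℓ) ht'ext
      · constructor
        · intro hp
          exact hne1 (hp.eq_of_length (by rw [bpre_len1]))
        · intro hp
          exact hne1 (hp.eq_of_length (by rw [bpre_len1])).symm
      · intro s hs t ht has hbt
        have htt' : t = t' := ht'dead t ht hbt
        subst htt'
        ext p
        constructor
        · rintro ⟨hp1, hp2⟩
          have hpl : p < (bpre z yz ℓ).1.length := by
            rw [bpre_len1]; exact codes_lt hp2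
          exact ⟨codes_of_prefix_lt has.1 hp1 hpl, hp2⟩
        · rintro ⟨hp1, hp2⟩
          exact ⟨codes_mono has.1 hp1, hp2⟩
      · refine ⟨{m | z m = true}, z, yz, fun m => ⟨(hz m).1, ?_⟩, rfl⟩
        rcases le_total m ℓ with h | h
        · exact Or.inl (bpre_ext z yz h)
        · exact Or.inr (bpre_ext z yz h)
    by_cases hxt : (bpre x yx ℓ).1 = t'.1
    · apply caseD y yy hy'
      intro hyt
      have : (bpre x yx ℓ).1.getD d false = (bpre y yy ℓ).1.getD d false := by
        rw [hxt, hyt]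
      rw [bpre_getD1 x yx ht'd, bpre_getD1 y yy ht'd] at this
      exact hdne this
    · exact caseD x yx hx' hxt
  · -- Case ¬D : no dead ends above `t1 n` of length `> d`
    push_neg at hD
    have grow : ∀ v, v ∈ T → NodeExt (t1 n) v → d < v.1.length →
        ∃ w, w ∈ T ∧ NodeExt v w ∧ v.1.length < w.1.length := by
      intro v hv hev hdv
      obtain ⟨w, hw, hvw, hwne⟩ := hD v hv hev hdv
      exact ⟨w, hw, hvw, proper_ext_longer hT hv hw hvw hwne⟩
    have reach : ∀ v, v ∈ T → NodeExt (t1 n) v → d < v.1.length → ∀ ℓ,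
        ∃ w, w ∈ T ∧ NodeExt v w ∧ ℓ ≤ w.1.length := by
      intro v hv hev hdv ℓ
      induction ℓ with
      | zero => exact ⟨v, hv, NodeExt.rfl, Nat.zero_le _⟩
      | succ m ih =>
        obtain ⟨w, hw, hvw, hlw⟩ := ih
        have hdw : d < w.1.length := lt_of_lt_of_le hdv hvw.1.length_le
        obtain ⟨w', hw', hww', hlw'⟩ := grow w hw (hev.trans hvw) hdw
        exact ⟨w', hw', hvw.trans hww', by omega⟩
    have exact_len : ∀ v, v ∈ T → NodeExt (t1 n) v → d < v.1.length → ∀ ℓ,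
        v.1.length ≤ ℓ → ∃ w, w ∈ T ∧ NodeExt v w ∧ w.1.length = ℓ := by
      intro v hv hev hdv ℓ hvℓ
      obtain ⟨w, hw, hvw, hlw⟩ := reach v hv hev hdv ℓ
      have hw2 : w.2.length = w.1.length := (hT.1 _ hw).symm
      have hv2 : v.2.length = v.1.length := (hT.1 _ hv).symm
      refine ⟨(w.1.take ℓ, w.2.take ℓ), hT.2 _ hw ℓ, ⟨?_, ?_⟩, ?_⟩
      · exact List.prefix_of_prefix_length_le hvw.1 (List.take_prefix _ _)
          (by rw [List.length_take]; omega)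
      · exact List.prefix_of_prefix_length_le hvw.2 (List.take_prefix _ _)
          (by rw [List.length_take]; omega)
      · simp only [List.length_take]; omega
    -- a frozen pair above the two branches
    have ha₀T : bpre x yx M ∈ T := (hx' M).1
    have hb₀T : bpre y yy M ∈ T := (hy' M).1
    obtain ⟨s', t', hs'T, ht'T, heas, hebt, hfroz⟩ :=
      exists_frozen hT had ha₀T hb₀T (d := d)
        (by rw [bpre_len1]; exact hdM) (by rw [bpre_len1]; exact hdM)
        (by rw [bpre_getD1 x yx hdM, bpre_getD1 y yy hdM]; exact hdne)
    have hs'ext : NodeExt (t1 n) s' := (branch_ge x yx hx' M hLM).trans heas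
    have ht'ext : NodeExt (t1 n) t' := (branch_ge y yy hy' M hLM).trans hebt
    have hMs' : M ≤ s'.1.length := by
      have := heas.1.length_le; rwa [bpre_len1] at this
    have hMt' : M ≤ t'.1.length := by
      have := hebt.1.length_le; rwa [bpre_len1] at this
    have hds' : d < s'.1.length := lt_of_lt_of_le hdM hMs'
    have hdt' : d < t'.1.length := lt_of_lt_of_le hdM hMt'
    -- an infinite branch through `s'`
    obtain ⟨v, hv0, hvT, hvchain, hvub⟩ : ∃ v : ℕ → List Bool × List ℕ, v 0 = s' ∧
        (∀ k, v k ∈ T) ∧ (∀ k, NodeExt (v k) (v (k + 1))) ∧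
        (∀ m : ℕ, ∃ k, m ≤ (v k).1.length) := by
      let R := {r : List Bool × List ℕ // r ∈ T ∧ NodeExt (t1 n) r ∧ d < r.1.length}
      have step2 : ∀ r : R, ∃ r' : R, NodeExt r.1 r'.1 ∧ r.1.1.length < r'.1.1.length := by
        rintro ⟨r, hr, her, hdr⟩
        obtain ⟨w, hw, hrw, hlen⟩ := grow r hr her hdr
        exact ⟨⟨w, hw, her.trans hrw, lt_trans hdr hlen⟩, hrw, hlen⟩
      choose nxt hext hlt using step2
      let g : ℕ → R := fun k => Nat.rec ⟨s', hs'T, hs'ext, hds'⟩ (fun _ r => nxt r) k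
      refine ⟨fun k => (g k).1, rfl, fun k => (g k).2.1, fun k => hext (g k), ?_⟩
      have hgrow : ∀ k, (g 0).1.1.length + k ≤ (g k).1.1.length := by
        intro k
        induction k with
        | zero => omega
        | succ m ih =>
          have hgm : g (m + 1) = nxt (g m) := rfl
          have := hlt (g m)
          rw [hgm]
          omega
      intro m
      exact ⟨m, le_trans (Nat.le_add_left m _) (hgrow m)⟩
    obtain ⟨x2, y2, hx2T, hag1, hag2⟩ := chain_branch hT v hvT hvchain hvub
    set ℓ := max s'.1.length t'.1.length with hℓ
    have hs'ℓ : s'.1.length ≤ ℓ := le_max_left _ _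
    have ht'ℓ : t'.1.length ≤ ℓ := le_max_right _ _
    -- `a` : initial segment of the new branch of length ℓ
    have hs'1 : s'.1 = (bpre x2 y2 s'.1.length).1 := by
      apply List.ext_getElem
      · rw [bpre_len1]
      · intro i h1 h2
        have hiv : i < (v 0).1.length := by rw [hv0]; exact h1
        have := hag1 0 i hiv
        rw [hv0] at this
        rw [List.getD_eq_getElem _ false h1] at this
        simp only [bpre, List.getElem_ofFn]
        exact this.symm
    have hs'2 : s'.2 = (bpre x2 y2 s'.1.length).2 := by
      have hlen2 : s'.2.length = s'.1.length := (hT.1 _ hs'T).symm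
      apply List.ext_getElem
      · rw [bpre_len2, hlen2]
      · intro i h1 h2
        have hiv : i < (v 0).2.length := by rw [hv0]; exact h1
        have := hag2 0 i hiv
        rw [hv0] at this
        rw [List.getD_eq_getElem _ 0 h1] at this
        simp only [bpre, List.getElem_ofFn]
        exact this.symm
    have hsa : NodeExt s' (bpre x2 y2 ℓ) := by
      constructor
      · rw [hs'1]; exact ofFn_prefix x2 hs'ℓ
      · rw [hs'2]; exact ofFn_prefix y2 hs'ℓ
    obtain ⟨b, hbT, htb, hblen⟩ := exact_len t' ht'T ht'ext hdt' ℓ ht'ℓ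
    have haT : bpre x2 y2 ℓ ∈ T := hx2T ℓ
    have hdℓ : d < ℓ := lt_of_lt_of_le hds' hs'ℓ
    -- getD values at d
    have hda : (bpre x2 y2 ℓ).1.getD d false = x d := by
      rw [bpre_getD1 x2 y2 hdℓ]
      have h1 : x2 d = (v 0).1.getD d false := hag1 0 d (by rw [hv0]; exact hds')
      rw [hv0] at h1
      have h2 : s'.1.getD d false = (bpre x yx M).1.getD d false :=
        prefix_getD false heas.1 (by rw [bpre_len1]; exact hdM)
      rw [h1, h2, bpre_getD1 x yx hdM]
    have hdb : b.1.getD d false = y d := by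
      have h2 : b.1.getD d false = (bpre y yy M).1.getD d false :=
        prefix_getD false (hebt.1.trans htb.1) (by rw [bpre_len1]; exact hdM)
      rw [h2, bpre_getD1 y yy hdM]
    have hdab : (bpre x2 y2 ℓ).1 ≠ b.1 := by
      intro h
      apply hdne
      rw [← hda, ← hdb, h]
    refine final (bpre x2 y2 ℓ) b ⟨haT, hbT, by rw [bpre_len1, hblen], ?_, ?_, ?_⟩
      (hs'ext.trans hsa) (ht'ext.trans htb)
    · constructor
      · intro hp
        exact hdab (hp.eq_of_length (by rw [bpre_len1, hblen]))
      · intro hp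
        exact hdab (hp.eq_of_length (by rw [bpre_len1, hblen])).symm
    · intro s hs t ht has hbt2
      rw [hfroz s hs t ht (hsa.trans has) (htb.trans hbt2),
        hfroz _ haT b hbT hsa htb]
    · refine ⟨{m | x2 m = true}, x2, y2, fun m => ⟨hx2T m, ?_⟩, rfl⟩
      rcases le_total m ℓ with h | h
      · exact Or.inl (bpre_ext x2 y2 h)
      · exact Or.inr (bpre_ext x2 y2 h)
end
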